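/- Let d ≥ 1, let (F_n)_{n≥0} be maps F_n : ℝ^d → ℝ^d, and let (P_n)_{n≥0} be real d×d idempotent matrices (P_n² = P_n). Let (ū_n) and (δ_n) be sequences in ℝ^d and define u_n := ū_n + (I − P_n) δ_n. Then for each n ≥ 0, the stable-correction equation (I − P_{n+1})(ū_{n+1} + (I − P_{n+1}) δ_{n+1} − F_n(ū_n + (I − P_n) δ_n)) = 0 holds if and only if u_{n+1} = P_{n+1} ū_{n+1} + (I − P_{n+1}) F_n(u_n). -/
import Mathlib

open Matrix

/-- The componentwise stable-correction equation of the projected Newton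
data-assimilation method, `(I − P_{n+1})(ū_{n+1} + (I − P_{n+1})δ_{n+1} − F_n(ū_n + (I − P_n)δ_n)) = 0`,
is equivalent to the forward synchronization iteration
`u_{n+1} = P_{n+1} ū_{n+1} + (I − P_{n+1}) F_n(u_n)` for `u_n = ū_n + (I − P_n)δ_n`. -/
theorem stable_correction_iff_synchronization
    (d : ℕ) (hd : 1 ≤ d)
    (F : ℕ → (Fin d → ℝ) → (Fin d → ℝ))
    (P : ℕ → Matrix (Fin d) (Fin d) ℝ)
    (hPidem : ∀ n, P n * P n = P n)
    (ubar δ : ℕ → Fin d → ℝ)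
    (u : ℕ → Fin d → ℝ)
    (hu : ∀ n, u n = ubar n + (1 - P n) *ᵥ δ n) :
    ∀ n : ℕ,
      (1 - P (n + 1)) *ᵥ
          (ubar (n + 1) + (1 - P (n + 1)) *ᵥ δ (n + 1)
            - F n (ubar n + (1 - P n) *ᵥ δ n)) = 0
        ↔ u (n + 1) = P (n + 1) *ᵥ ubar (n + 1) + (1 - P (n + 1)) *ᵥ F n (u n) := by
  intro n
  have hQ : (1 - P (n+1)) * (1 - P (n+1)) = 1 - P (n+1) := by
    rw [mul_sub, mul_one, sub_mul, one_mul, hPidem]; abel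
  rw [hu, hu]
  constructor
  · intro h
    have h' : (1 - P (n+1)) *ᵥ (ubar (n+1) + (1 - P (n+1)) *ᵥ δ (n+1)) =
        (1 - P (n+1)) *ᵥ F n (ubar n + (1 - P n) *ᵥ δ n) := by
      rw [Matrix.mulVec_sub] at h
      exact sub_eq_zero.mp h
    have key : (1 - P (n+1)) *ᵥ (ubar (n+1) + (1 - P (n+1)) *ᵥ δ (n+1))
        = (1 - P (n+1)) *ᵥ ubar (n+1) + (1 - P (n+1)) *ᵥ δ (n+1) := by
      rw [Matrix.mulVec_add, Matrix.mulVec_mulVec, hQ]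
    have hsplit : ubar (n+1) = P (n+1) *ᵥ ubar (n+1) + (1 - P (n+1)) *ᵥ ubar (n+1) := by
      rw [Matrix.sub_mulVec, Matrix.one_mulVec]; abel
    calc ubar (n+1) + (1 - P (n+1)) *ᵥ δ (n+1)
        = P (n+1) *ᵥ ubar (n+1) + ((1 - P (n+1)) *ᵥ ubar (n+1) + (1 - P (n+1)) *ᵥ δ (n+1)) := by
          rw [← add_assoc, ← hsplit]
      _ = P (n+1) *ᵥ ubar (n+1) + (1 - P (n+1)) *ᵥ F n (ubar n + (1 - P n) *ᵥ δ n) := by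
          rw [← key, h']
  · intro h
    rw [Matrix.mulVec_sub, sub_eq_zero]
    have := congrArg (fun v => (1 - P (n+1)) *ᵥ v) h
    simp only [Matrix.mulVec_add, Matrix.mulVec_mulVec, hQ] at this ⊢
    rw [this]
    have hPQ : (1 - P (n+1)) * P (n+1) = 0 := by
      rw [sub_mul, one_mul, hPidem, sub_self]
    rw [hPQ, Matrix.zero_mulVec, zero_add]
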